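/- The payoff sequence (−1)(+1)(−1)(−1)(+1)(+1)(−1)(−1)(−1)(+1)(+1)(+1)… (where the block for n ≥ 1 consists of n payoffs of −1 followed by n payoffs of +1) has liminf mean-payoff value at most 0, but for every L ≥ 1 it fails FWMP(L, 0), i.e., it contains arbitrarily late positions from which no window of length at most L has nonnegative mean payoff. -/

import Mathlib

def FWMP (w : ℕ → ℤ) (L : ℕ) (lam : ℝ) : Prop :=
  ∃ k : ℕ, ∀ i ≥ k, ∃ j : ℕ, 1 ≤ j ∧ j ≤ L ∧
    (∑ m ∈ Finset.Ico i (i + j), (w m : ℝ)) / (j : ℝ) ≥ lam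

noncomputable def FWMPvalue (w : ℕ → ℤ) (L : ℕ) : ℝ := sSup {lam : ℝ | FWMP w L lam}

def BWMP (w : ℕ → ℤ) (lam : ℝ) : Prop := ∃ L : ℕ, 1 ≤ L ∧ FWMP w L lam

noncomputable def BWMPvalue (w : ℕ → ℤ) : ℝ := sSup {lam : ℝ | BWMP w lam}

/-- every index lies in some block -/
lemma aux_cover (k : ℕ) : ∃ n : ℕ, 1 ≤ n ∧ (n - 1) * n ≤ k ∧ k < n * (n + 1) := by
  have hP : ∃ n : ℕ, k < n * (n + 1) := ⟨k + 1, by nlinarith⟩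
  classical
  set n := Nat.find hP with hn
  have hspec : k < n * (n + 1) := Nat.find_spec hP
  have hn1 : 1 ≤ n := by
    by_contra h
    have h0 : n = 0 := by omega
    rw [h0] at hspec; omega
  have hmin : ¬ k < (n - 1) * (n - 1 + 1) := Nat.find_min hP (by omega)
  have heq : (n - 1) * (n - 1 + 1) = (n - 1) * n := by congr 1; omega
  rw [heq] at hmin
  push_neg at hmin
  exact ⟨n, hn1, hmin, hspec⟩

lemma aux_pm (w : ℕ → ℤ)
    (hw : ∀ n : ℕ, 1 ≤ n → ∀ j < n,
      w ((n - 1) * n + j) = -1 ∧ w ((n - 1) * n + n + j) = 1) (k : ℕ) :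
    w k = -1 ∨ w k = 1 := by
  obtain ⟨n, hn1, hle, hlt⟩ := aux_cover k
  have hform : k < (n - 1) * n + 2 * n := by
    have heq : (n - 1) * n + 2 * n = n * (n + 1) := by
      cases n with
      | zero => simp
      | succ m => simp [Nat.succ_sub_one]; ring
    omega
  by_cases hc : k < (n - 1) * n + n
  · left
    have hj : k - (n - 1) * n < n := by omega
    have := (hw n hn1 _ hj).1
    rwa [Nat.add_sub_cancel' hle] at this
  · right
    have hj : k - ((n - 1) * n + n) < n := by omega
    have := (hw n hn1 _ hj).2
    have hk : (n - 1) * n + n + (k - ((n - 1) * n + n)) = k := by omega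
    rwa [hk] at this

lemma aux_sum (w : ℕ → ℤ)
    (hw : ∀ n : ℕ, 1 ≤ n → ∀ j < n,
      w ((n - 1) * n + j) = -1 ∧ w ((n - 1) * n + n + j) = 1) :
    ∀ n : ℕ, ∑ k ∈ Finset.range (n * (n + 1)), w k = 0 := by
  intro n
  induction n with
  | zero => simp
  | succ m ih =>
    have hsplit : (m + 1) * (m + 2) = (m * (m + 1) + (m + 1)) + (m + 1) := by ring
    rw [hsplit, Finset.sum_range_add, Finset.sum_range_add, ih]
    have h1 : ∀ j ∈ Finset.range (m + 1), w (m * (m + 1) + j) = -1 := by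
      intro j hj
      have := (hw (m + 1) (by omega) j (Finset.mem_range.mp hj)).1
      simpa using this
    have h2 : ∀ j ∈ Finset.range (m + 1), w (m * (m + 1) + (m + 1) + j) = 1 := by
      intro j hj
      have := (hw (m + 1) (by omega) j (Finset.mem_range.mp hj)).2
      simpa using this
    rw [Finset.sum_congr rfl h1, Finset.sum_congr rfl h2]
    simp

theorem stmt12 (w : ℕ → ℤ)
    (hw : ∀ n : ℕ, 1 ≤ n → ∀ j < n,
      w ((n - 1) * n + j) = -1 ∧ w ((n - 1) * n + n + j) = 1) :
    Filter.liminf (fun N : ℕ => (∑ k ∈ Finset.range N, (w k : ℝ)) / (N : ℝ))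
        Filter.atTop ≤ 0 ∧
    ∀ L : ℕ, 1 ≤ L → ¬ FWMP w L 0 := by
  constructor
  · apply Filter.liminf_le_of_frequently_le
    · rw [Filter.frequently_atTop]
      intro a
      refine ⟨(a + 1) * (a + 2), by nlinarith, ?_⟩
      have h0 : ∑ k ∈ Finset.range ((a + 1) * (a + 2)), (w k : ℝ) = 0 := by
        have h := aux_sum w hw (a + 1)
        rw [show (a + 1) * (a + 1 + 1) = (a + 1) * (a + 2) from by ring] at h
        exact_mod_cast h
      rw [h0]; simp
    · refine Filter.isBoundedUnder_of ⟨-1, fun N => ?_⟩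
      rcases Nat.eq_zero_or_pos N with h0 | h0
      · subst h0; norm_num
      · have hNpos : (0 : ℝ) < N := by exact_mod_cast h0
        rw [ge_iff_le, le_div_iff₀ hNpos]
        have hbound : (-(N : ℝ)) ≤ ∑ k ∈ Finset.range N, (w k : ℝ) := by
          have : ∑ k ∈ Finset.range N, (-1 : ℝ) ≤ ∑ k ∈ Finset.range N, (w k : ℝ) := by
            apply Finset.sum_le_sum
            intro k _
            rcases aux_pm w hw k with h | h <;> rw [h] <;> norm_num
          simpa using this
        linarith
  · rintro L hL ⟨k, hk⟩
    set n := max (L + 1) (k + 1) with hn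
    have hn1 : 1 ≤ n := by omega
    have hik : (n - 1) * n ≥ k := by
      have : n - 1 ≤ (n - 1) * n := Nat.le_mul_of_pos_right _ (by omega)
      omega
    obtain ⟨j, hj1, hjL, hge⟩ := hk ((n - 1) * n) hik
    have hsum : ∑ m ∈ Finset.Ico ((n - 1) * n) ((n - 1) * n + j), (w m : ℝ) = -(j : ℝ) := by
      rw [Finset.sum_Ico_eq_sum_range]
      have hval : ∀ t ∈ Finset.range ((n - 1) * n + j - (n - 1) * n),
          (w ((n - 1) * n + t) : ℝ) = -1 := by
        intro t ht
        have htj : t < j := by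
          have := Finset.mem_range.mp ht; omega
        have : w ((n - 1) * n + t) = -1 := (hw n hn1 t (by omega)).1
        rw [this]; norm_num
      rw [Finset.sum_congr rfl hval]
      simp
    rw [hsum] at hge
    have hjpos : (0 : ℝ) < j := by exact_mod_cast hj1
    have : (-(j : ℝ)) / j = -1 := by field_simp
    rw [this] at hge
    linarith
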